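/- Let M be a module over the ring C⁰(ℤ_p,𝔽_p) of continuous functions ℤ_p → 𝔽_p, and suppose the set of p-adic integers x with M_x = M/𝓘(x)M ≠ 0 is finite, say equal to {x₁,…,x_n} with the x_i pairwise distinct. Then M is the internal direct sum of the submodules M_(x₁),…,M_(x_n), where M_(x) = {u ∈ M : 𝓘(x)·u = 0}, and for each i there is an isomorphism of C⁰(ℤ_p,𝔽_p)-modules M_(x_i) ≅ M_{x_i}. -/

import Mathlib

/-- `𝔽_p = ZMod p` carries the discrete topology. -/
instance (p : ℕ) : TopologicalSpace (ZMod p) := ⊥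

instance (p : ℕ) : DiscreteTopology (ZMod p) := ⟨rfl⟩

noncomputable instance (p : ℕ) [Fact p.Prime] : DecidableEq (PadicInt p) :=
  Classical.decEq _

/-- For `x ∈ ℤ_p`, the maximal ideal `𝓘(x) = {F ∈ C⁰(ℤ_p, 𝔽_p) : F(x) = 0}` of the
ring of continuous functions `ℤ_p → 𝔽_p`. -/
noncomputable def evalIdeal (p : ℕ) [Fact p.Prime] (x : PadicInt p) : Ideal C(PadicInt p, ZMod p) :=
  RingHom.ker ((Pi.evalRingHom (fun _ : PadicInt p => ZMod p) x).comp
    (ContinuousMap.coeFnRingHom))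

/-- `M_(x) = {u ∈ M : 𝓘(x)·u = 0}`, a submodule of `M`. -/
def eigenSubmodule (p : ℕ) [Fact p.Prime]
    (M : Type*) [AddCommGroup M] [Module C(PadicInt p, ZMod p) M] (x : PadicInt p) :
    Submodule C(PadicInt p, ZMod p) M where
  carrier := {u | ∀ F ∈ evalIdeal p x, F • u = 0}
  add_mem' := by
    intro u v hu hv F hF
    rw [smul_add, hu F hF, hv F hF, add_zero]
  zero_mem' := by intro F _; exact smul_zero F
  smul_mem' := by
    intro c u hu F hF
    rw [smul_comm, hu F hF, smul_zero]

open Metric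

section Aux
variable {p : ℕ} [Fact p.Prime]

lemma mem_evalIdeal {F : C(PadicInt p, ZMod p)} {x : PadicInt p} :
    F ∈ evalIdeal p x ↔ F x = 0 := by
  simp [evalIdeal, RingHom.mem_ker]

open Classical in
noncomputable def indic (U : Set (PadicInt p)) (hU : IsClopen U) : C(PadicInt p, ZMod p) where
  toFun := fun y => if y ∈ U then 1 else 0
  continuous_toFun := by
    rw [continuous_def]
    intro t _
    have : (fun y => if y ∈ U then (1 : ZMod p) else 0) ⁻¹' t =
        (if (1 : ZMod p) ∈ t then U else ∅) ∪ (if (0 : ZMod p) ∈ t then Uᶜ else ∅) := by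
      ext y
      by_cases h : y ∈ U <;> by_cases h1 : (1 : ZMod p) ∈ t <;>
        by_cases h0 : (0 : ZMod p) ∈ t <;> simp [h, h1, h0]
    rw [this]
    apply IsOpen.union <;> split
    · exact hU.2
    · exact isOpen_empty
    · exact hU.1.isOpen_compl
    · exact isOpen_empty

open Classical in
lemma indic_apply (U : Set (PadicInt p)) (hU : IsClopen U) (y : PadicInt p) :
    indic U hU y = if y ∈ U then 1 else 0 := by
  simp [indic]

lemma indic_apply_of_mem (U : Set (PadicInt p)) (hU : IsClopen U) {y : PadicInt p}
    (h : y ∈ U) : indic U hU y = 1 := by rw [indic_apply]; simp [h]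

lemma indic_apply_of_not_mem (U : Set (PadicInt p)) (hU : IsClopen U) {y : PadicInt p}
    (h : y ∉ U) : indic U hU y = 0 := by rw [indic_apply]; simp [h]

variable {M : Type*} [AddCommGroup M] [Module C(PadicInt p, ZMod p) M]

lemma mem_eigen_iff {x : PadicInt p} {u : M} :
    u ∈ eigenSubmodule p M x ↔ ∀ F ∈ evalIdeal p x, F • u = 0 := Iff.rfl

lemma indic_smul_eq_zero_of_subset {V W : Set (PadicInt p)} (hV : IsClopen V) (hW : IsClopen W)
    (hsub : V ⊆ W) {u : M} (h : indic W hW • u = 0) : indic V hV • u = 0 := by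
  have hmul : indic V hV * indic W hW = indic V hV := by
    ext z
    by_cases hz : z ∈ V
    · simp [indic_apply_of_mem _ _ hz, indic_apply_of_mem _ _ (hsub hz)]
    · simp [indic_apply_of_not_mem _ _ hz]
  rw [← hmul, mul_smul, h, smul_zero]

lemma exists_ball_indic_smul_eq_zero {y : PadicInt p} {u : M}
    (hu : u ∈ evalIdeal p y • (⊤ : Submodule C(PadicInt p, ZMod p) M)) :
    ∃ ε : ℝ, 0 < ε ∧ indic (ball y ε) (IsUltrametricDist.isClopen_ball y ε) • u = 0 := by
  refine Submodule.smul_induction_on hu ?_ ?_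
  · intro F hF m _
    rw [mem_evalIdeal] at hF
    have hopen : IsOpen (F ⁻¹' {0}) := (isOpen_discrete _).preimage F.continuous
    obtain ⟨ε, hε, hsub⟩ := Metric.isOpen_iff.mp hopen y (by simp [hF])
    refine ⟨ε, hε, ?_⟩
    have hmul : indic (ball y ε) (IsUltrametricDist.isClopen_ball y ε) * F = 0 := by
      ext z
      by_cases hz : z ∈ ball y ε
      · have : F z = 0 := hsub hz
        simp [this]
      · simp [indic_apply_of_not_mem _ _ hz]
    rw [smul_smul, hmul, zero_smul]
  · rintro u v ⟨ε₁, h1, e1⟩ ⟨ε₂, h2, e2⟩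
    refine ⟨min ε₁ ε₂, lt_min h1 h2, ?_⟩
    rw [smul_add]
    rw [indic_smul_eq_zero_of_subset _ _ (ball_subset_ball (min_le_left ε₁ ε₂)) e1,
      indic_smul_eq_zero_of_subset _ _ (ball_subset_ball (min_le_right ε₁ ε₂)) e2, add_zero]

lemma one_sub_prod_smul {ι : Type*} (t : Finset ι) (e : ι → C(PadicInt p, ZMod p)) (u : M)
    (h : ∀ i ∈ t, e i • u = 0) :
    ((1 : C(PadicInt p, ZMod p)) - ∏ i ∈ t, (1 - e i)) • u = 0 := by
  classical
  induction t using Finset.induction_on with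
  | empty => simp
  | @insert a t hni ih =>
    rw [Finset.prod_insert hni]
    have : (1 : C(PadicInt p, ZMod p)) - (1 - e a) * ∏ i ∈ t, (1 - e i) =
        (1 - ∏ i ∈ t, (1 - e i)) + (∏ i ∈ t, (1 - e i)) * e a := by ring
    rw [this, add_smul, ih (fun i hi => h i (Finset.mem_insert_of_mem hi)), mul_smul,
      h a (Finset.mem_insert_self a t), smul_zero, add_zero]

lemma smul_eq_zero_of_forall_eq_zero {s : Finset (PadicInt p)}
    (hs : ∀ x : PadicInt p, x ∉ s →
      evalIdeal p x • (⊤ : Submodule C(PadicInt p, ZMod p) M) = ⊤)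
    {g : C(PadicInt p, ZMod p)} (hg : ∀ x ∈ s, g x = 0) (u : M) : g • u = 0 := by
  classical
  set K : Set (PadicInt p) := g ⁻¹' {0}ᶜ with hK
  have hKclosed : IsClosed K := (isClosed_discrete _).preimage g.continuous
  have hKcompact : IsCompact K := hKclosed.isCompact
  have hchoice : ∀ y : K, ∃ ε : ℝ, 0 < ε ∧
      indic (ball (y : PadicInt p) ε) (IsUltrametricDist.isClopen_ball _ ε) • u = 0 := by
    intro y
    have hy : (y : PadicInt p) ∉ s := by
      intro hmem
      have h2 := y.2
      simp only [hK, Set.mem_preimage, Set.mem_compl_iff, Set.mem_singleton_iff] at h2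
      exact h2 (hg _ hmem)
    exact exists_ball_indic_smul_eq_zero (by rw [hs _ hy]; exact Submodule.mem_top)
  choose ε hεpos hεkill using hchoice
  have hcover : K ⊆ ⋃ y : K, ball (y : PadicInt p) (ε y) := fun z hz =>
    Set.mem_iUnion.mpr ⟨⟨z, hz⟩, mem_ball_self (hεpos _)⟩
  obtain ⟨t, ht⟩ := hKcompact.elim_finite_subcover _ (fun y => isOpen_ball) hcover
  set e : K → C(PadicInt p, ZMod p) :=
    fun y => indic (ball (y : PadicInt p) (ε y)) (IsUltrametricDist.isClopen_ball _ _) with he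
  have hfac : g = g * (1 - ∏ y ∈ t, (1 - e y)) := by
    ext z
    rw [ContinuousMap.mul_apply]
    by_cases hz : g z = 0
    · simp [hz]
    · have hzK : z ∈ K := by simp [hK, hz]
      obtain ⟨y, hyt, hyz⟩ := Set.mem_iUnion₂.mp (ht hzK)
      have hprod : (∏ y ∈ t, ((1 : C(PadicInt p, ZMod p)) - e y)) z = 0 := by
        rw [ContinuousMap.prod_apply]
        refine Finset.prod_eq_zero hyt ?_
        simp [ContinuousMap.sub_apply, he, indic_apply_of_mem _ _ hyz]
      simp [ContinuousMap.sub_apply, hprod]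
  rw [hfac, mul_smul, one_sub_prod_smul t e u (fun i _ => hεkill i), smul_zero]

end Aux

/-- Let `M` be a module over `C⁰(ℤ_p, 𝔽_p)` such that the set of `x ∈ ℤ_p`
with `M_x = M/𝓘(x)M ≠ 0` is finite, equal to a finset `s = {x₁,…,xₙ}`. Then `M` is the
internal direct sum of the submodules `M_(x)` for `x ∈ s`, and `M_(x) ≅ M_x` as
`C⁰(ℤ_p, 𝔽_p)`-modules for each `x ∈ s`. -/
theorem internal_directSum_of_finite_support (p : ℕ) [Fact p.Prime]
    (M : Type*) [AddCommGroup M] [Module C(PadicInt p, ZMod p) M]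
    (s : Finset (PadicInt p))
    (hs : ∀ x : PadicInt p,
      (evalIdeal p x • (⊤ : Submodule C(PadicInt p, ZMod p) M) ≠ ⊤) ↔ x ∈ s) :
    DirectSum.IsInternal (fun x : s => eigenSubmodule p M (x : PadicInt p)) ∧
    ∀ x ∈ s, Nonempty
      ((eigenSubmodule p M x) ≃ₗ[C(PadicInt p, ZMod p)]
        (M ⧸ (evalIdeal p x • (⊤ : Submodule C(PadicInt p, ZMod p) M)))) := by
  classical
  have hsE : ∀ x : PadicInt p, x ∉ s →
      evalIdeal p x • (⊤ : Submodule C(PadicInt p, ZMod p) M) = ⊤ := by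
    intro x hx
    by_contra h
    exact hx ((hs x).mp h)
  obtain ⟨ε, hε, hεle⟩ : ∃ ε : ℝ, 0 < ε ∧ ∀ x ∈ s, ∀ y ∈ s, x ≠ y → ε ≤ dist x y := by
    by_cases h : s.offDiag.Nonempty
    · refine ⟨s.offDiag.inf' h fun q => dist q.1 q.2, ?_, ?_⟩
      · rw [Finset.lt_inf'_iff]
        rintro ⟨a, b⟩ hab
        rw [Finset.mem_offDiag] at hab
        exact dist_pos.mpr hab.2.2
      · intro x hx y hy hxy
        have hmem : (x, y) ∈ s.offDiag := Finset.mem_offDiag.mpr ⟨hx, hy, hxy⟩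
        exact Finset.inf'_le (fun q => dist q.1 q.2) hmem
    · refine ⟨1, one_pos, fun x hx y hy hxy => absurd ?_ h⟩
      have hmem : (x, y) ∈ s.offDiag := Finset.mem_offDiag.mpr ⟨hx, hy, hxy⟩
      exact ⟨(x, y), hmem⟩
  set e : PadicInt p → C(PadicInt p, ZMod p) :=
    fun x => indic (ball x ε) (IsUltrametricDist.isClopen_ball x ε) with he
  have he_self : ∀ x, e x x = 1 := fun x => indic_apply_of_mem _ _ (mem_ball_self hε)
  have he_ne : ∀ x ∈ s, ∀ y ∈ s, y ≠ x → e y x = 0 := by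
    intro x hx y hy hyx
    refine indic_apply_of_not_mem _ _ ?_
    intro hmem
    rw [mem_ball] at hmem
    have hle := hεle y hy x hx hyx
    rw [dist_comm] at hle
    exact absurd hmem (not_lt.mpr hle)
  have hdecomp : ∀ u : M, (∑ x ∈ s, e x) • u = u := by
    intro u
    have hg : ∀ x ∈ s, ((1 : C(PadicInt p, ZMod p)) - ∑ y ∈ s, e y) x = 0 := by
      intro x hx
      rw [ContinuousMap.sub_apply, ContinuousMap.one_apply, ContinuousMap.sum_apply]
      rw [Finset.sum_eq_single x (fun y hy hyx => he_ne x hx y hy hyx) (fun h => absurd hx h),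
        he_self x, sub_self]
    have h0 := smul_eq_zero_of_forall_eq_zero hsE hg u
    rw [sub_smul, one_smul, sub_eq_zero] at h0
    exact h0.symm
  have hmemEig : ∀ x ∈ s, ∀ u : M, e x • u ∈ eigenSubmodule p M x := by
    intro x hx u
    rw [mem_eigen_iff]
    intro F hF
    rw [mem_evalIdeal] at hF
    rw [smul_smul]
    refine smul_eq_zero_of_forall_eq_zero hsE ?_ u
    intro y hy
    rw [ContinuousMap.mul_apply]
    by_cases hxy : y = x
    · subst hxy; rw [hF, zero_mul]
    · rw [he_ne y hy x hx (fun h => hxy h.symm), mul_zero]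
  have hsup : ⨆ x : s, eigenSubmodule p M (x : PadicInt p) = ⊤ := by
    rw [eq_top_iff]
    intro u _
    have hmem : (∑ x ∈ s, e x) • u ∈ ⨆ x : s, eigenSubmodule p M (x : PadicInt p) := by
      rw [Finset.sum_smul]
      refine Submodule.sum_mem _ fun x hx => ?_
      exact Submodule.mem_iSup_of_mem ⟨x, hx⟩ (hmemEig x hx u)
    rwa [hdecomp u] at hmem
  have hind : iSupIndep (fun x : s => eigenSubmodule p M (x : PadicInt p)) := by
    intro i
    rw [disjoint_iff_inf_le]
    intro u hu
    rw [Submodule.mem_inf] at hu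
    obtain ⟨h1, h2⟩ := hu
    have hle : (⨆ (j : s) (_ : j ≠ i), eigenSubmodule p M (j : PadicInt p)) ≤
        LinearMap.ker (LinearMap.lsmul C(PadicInt p, ZMod p) M (e (i : PadicInt p))) := by
      refine iSup_le fun j => iSup_le fun hj => ?_
      intro v hv
      have hev : e (i : PadicInt p) • v = 0 :=
        (mem_eigen_iff.mp hv) _ (mem_evalIdeal.mpr
          (he_ne (j : PadicInt p) j.2 (i : PadicInt p) i.2
            (fun h => hj (Subtype.ext (h.symm ▸ rfl)))))
      simpa [LinearMap.mem_ker, LinearMap.lsmul_apply] using hev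
    have h2' : e (i : PadicInt p) • u = 0 := by
      have := hle h2
      simpa [LinearMap.mem_ker, LinearMap.lsmul_apply] using this
    have h1' : ((1 : C(PadicInt p, ZMod p)) - e (i : PadicInt p)) • u = 0 :=
      (mem_eigen_iff.mp h1) _ (mem_evalIdeal.mpr
        (by rw [ContinuousMap.sub_apply, ContinuousMap.one_apply, he_self, sub_self]))
    have hu0 : u = 0 := by
      calc u = ((1 - e (i : PadicInt p)) + e (i : PadicInt p)) • u := by
              rw [sub_add_cancel, one_smul]
        _ = (1 - e (i : PadicInt p)) • u + e (i : PadicInt p) • u := add_smul _ _ _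
        _ = 0 := by rw [h1', h2', add_zero]
    simp [Submodule.mem_bot, hu0]
  refine ⟨(DirectSum.isInternal_submodule_iff_iSupIndep_and_iSup_eq_top _).mpr ⟨hind, hsup⟩, ?_⟩
  intro x hx
  set I := evalIdeal p x • (⊤ : Submodule C(PadicInt p, ZMod p) M) with hI
  set φ : eigenSubmodule p M x →ₗ[C(PadicInt p, ZMod p)] M ⧸ I :=
    I.mkQ.comp (eigenSubmodule p M x).subtype with hφ
  have hinj : Function.Injective φ := by
    rw [← LinearMap.ker_eq_bot, eq_bot_iff]
    rintro ⟨u, humem⟩ hker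
    have huI : u ∈ I := by
      have hz := LinearMap.mem_ker.mp hker
      simpa [hφ, Submodule.Quotient.mk_eq_zero] using hz
    obtain ⟨ε', hε', hkill⟩ := exists_ball_indic_smul_eq_zero (hI ▸ huI)
    have h1' : ((1 : C(PadicInt p, ZMod p)) -
        indic (ball x ε') (IsUltrametricDist.isClopen_ball x ε')) • u = 0 :=
      (mem_eigen_iff.mp humem) _ (mem_evalIdeal.mpr
        (by rw [ContinuousMap.sub_apply, ContinuousMap.one_apply,
          indic_apply_of_mem _ _ (mem_ball_self hε'), sub_self]))
    have hu0 : u = 0 := by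
      calc u = ((1 - indic (ball x ε') (IsUltrametricDist.isClopen_ball x ε')) +
              indic (ball x ε') (IsUltrametricDist.isClopen_ball x ε')) • u := by
              rw [sub_add_cancel, one_smul]
        _ = _ • u + _ • u := add_smul _ _ _
        _ = 0 := by rw [h1', hkill, add_zero]
    exact (Submodule.mem_bot _).mpr (Subtype.ext hu0)
  have hsurj : Function.Surjective φ := by
    intro q
    obtain ⟨v, rfl⟩ := Submodule.mkQ_surjective I q
    refine ⟨⟨e x • v, hmemEig x hx v⟩, ?_⟩
    show I.mkQ (e x • v) = I.mkQ v
    rw [Submodule.mkQ_apply, Submodule.mkQ_apply, Submodule.Quotient.eq]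
    have hsum : e x • v + ∑ y ∈ s.erase x, e y • v = v := by
      rw [Finset.add_sum_erase s (fun y => e y • v) hx, ← Finset.sum_smul, hdecomp]
    have hmemI : v - e x • v ∈ I := by
      have hS : ∑ y ∈ s.erase x, e y • v = v - e x • v := eq_sub_of_add_eq' hsum
      rw [← hS]
      refine Submodule.sum_mem _ fun y hy => ?_
      exact Submodule.smul_mem_smul
        (mem_evalIdeal.mpr
          (he_ne x hx y (Finset.mem_of_mem_erase hy) (Finset.ne_of_mem_erase hy)))
        Submodule.mem_top
    rw [show e x • v - v = -(v - e x • v) by rw [neg_sub]]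
    exact neg_mem hmemI
  exact ⟨LinearEquiv.ofBijective φ ⟨hinj, hsurj⟩⟩
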